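/- Let G=(V,E) be a finite simple graph on V={1,…,n} with an Ising model having vertex parameters (θ_i) and edge parameters (θ_{ij}), and let Ĝ=(V̂,Ê) with V̂ = V ∪ {n+1}, Ê = E ∪ {{i,n+1} : i∈V}, carry the zero-field Ising model with θ̂_{i,n+1} = θ_i and θ̂_{ij} = θ_{ij} for {i,j}∈E. Then for every edge {i,j}∈E, the moment of the extended model equals that of the original model: Ê_θ̂[x_i x_j] = E_θ[x_i x_j]. -/

import Mathlib

noncomputable section

/-- The spin value ±1 associated to a Boolean. -/
def spin (b : Bool) : ℝ := if b then 1 else -1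

variable {V : Type*} [Fintype V] [DecidableEq V]

/-- The product σᵢσⱼ over an unordered pair. -/
def pairProd (σ : V → ℝ) : Sym2 V → ℝ :=
  Sym2.lift ⟨fun i j => σ i * σ j, fun i j => mul_comm (σ i) (σ j)⟩

/-- Energy (exponent) of an Ising model with vertex parameters θv and edge parameters θe. -/
def energy (G : SimpleGraph V) [DecidableRel G.Adj]
    (θv : V → ℝ) (θe : Sym2 V → ℝ) (x : V → Bool) : ℝ :=
  ∑ i, θv i * spin (x i) + ∑ e ∈ G.edgeFinset, θe e * pairProd (fun i => spin (x i)) e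

/-- Partition function of the Ising model. -/
def partitionFn (G : SimpleGraph V) [DecidableRel G.Adj]
    (θv : V → ℝ) (θe : Sym2 V → ℝ) : ℝ :=
  ∑ x : V → Bool, Real.exp (energy G θv θe x)

/-- Probability mass function of the Ising model. -/
def isingProb (G : SimpleGraph V) [DecidableRel G.Adj]
    (θv : V → ℝ) (θe : Sym2 V → ℝ) (x : V → Bool) : ℝ :=
  Real.exp (energy G θv θe x) / partitionFn G θv θe

/-- Pair moment E_θ[x_i x_j]. -/
def momentPair (G : SimpleGraph V) [DecidableRel G.Adj]
    (θv : V → ℝ) (θe : Sym2 V → ℝ) (i j : V) : ℝ :=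
  ∑ x : V → Bool, isingProb G θv θe x * spin (x i) * spin (x j)

/-- Single-site moment (mean) E_θ[x_i]. -/
def momentSingle (G : SimpleGraph V) [DecidableRel G.Adj]
    (θv : V → ℝ) (θe : Sym2 V → ℝ) (i : V) : ℝ :=
  ∑ x : V → Bool, isingProb G θv θe x * spin (x i)

/- ### Auxiliary lemmas -/

lemma spin_not (b : Bool) : spin (!b) = - spin b := by
  cases b <;> simp [spin]

lemma pairProd_mk (σ : V → ℝ) (a b : V) : pairProd σ s(a, b) = σ a * σ b := by
  simp [pairProd]

/-- The extension equiv: a configuration on `Option V` is a pair (value at `none`,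
configuration on `V`). -/
def extEquiv (V : Type*) : Bool × (V → Bool) ≃ (Option V → Bool) where
  toFun p o := o.elim p.1 p.2
  invFun y := (y none, fun v => y (some v))
  left_inv p := by rfl
  right_inv y := by funext o; cases o <;> rfl

/-- Flipping all spins is a sum-preserving bijection on configurations. -/
lemma sum_flip (f : (V → Bool) → ℝ) :
    ∑ x : V → Bool, f (fun v => !(x v)) = ∑ x : V → Bool, f x := by
  refine Fintype.sum_bijective (fun x v => !(x v)) ?_ _ _ (fun x => rfl)
  refine ⟨fun a b h => funext fun v => ?_, fun y => ⟨fun v => !(y v), by funext v; simp⟩⟩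
  have := congrFun h v
  simpa using this

/-- Edge set of the extended graph. -/
lemma edgeFinset_ghat (G : SimpleGraph V) [DecidableRel G.Adj]
    (Ghat : SimpleGraph (Option V)) [DecidableRel Ghat.Adj]
    (hsome : ∀ i j : V, Ghat.Adj (some i) (some j) ↔ G.Adj i j)
    (hnone : ∀ i : V, Ghat.Adj (some i) none) :
    Ghat.edgeFinset =
      G.edgeFinset.image (Sym2.map some) ∪
        Finset.univ.image (fun a : V => s(some a, none)) := by
  ext e
  induction e using Sym2.ind with
  | _ u v =>
    simp only [SimpleGraph.mem_edgeFinset, SimpleGraph.mem_edgeSet, Finset.mem_union,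
      Finset.mem_image, Finset.mem_univ, true_and]
    constructor
    · intro h
      match u, v with
      | some a, some b =>
        exact Or.inl ⟨s(a, b), (by simpa using (hsome a b).1 h : s(a,b) ∈ G.edgeSet), rfl⟩
      | some a, none => exact Or.inr ⟨a, rfl⟩
      | none, some b => exact Or.inr ⟨b, Sym2.eq_swap⟩
      | none, none => exact absurd h (Ghat.loopless.irrefl none)
    · rintro (⟨e', he', heq⟩ | ⟨a, ha⟩)
      · induction e' using Sym2.ind with
        | _ p q =>
          have hpq : G.Adj p q := by simpa using he'
          rw [Sym2.map_pair_eq, Sym2.eq_iff] at heq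
          rcases heq with ⟨h1, h2⟩ | ⟨h1, h2⟩
          · rw [← h1, ← h2]; exact (hsome p q).2 hpq
          · rw [← h1, ← h2]; exact ((hsome q p).2 hpq.symm)
      · rw [Sym2.eq_iff] at ha
        rcases ha with ⟨h1, h2⟩ | ⟨h1, h2⟩
        · rw [← h1, ← h2]; exact hnone a
        · rw [← h1, ← h2]; exact (hnone a).symm

/-- For every edge `{i,j}` of `G`, the edge moment of the zero-field Ising
model on the extended graph `Ghat` equals the edge moment of the original Ising model. -/
theorem extended_graph_edge_moments
    (G : SimpleGraph V) [DecidableRel G.Adj]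
    (Ghat : SimpleGraph (Option V)) [DecidableRel Ghat.Adj]
    (hsome : ∀ i j : V, Ghat.Adj (some i) (some j) ↔ G.Adj i j)
    (hnone : ∀ i : V, Ghat.Adj (some i) none)
    (θv : V → ℝ) (θe : Sym2 V → ℝ) (θhat : Sym2 (Option V) → ℝ)
    (hθe : ∀ i j : V, G.Adj i j → θhat s(some i, some j) = θe s(i, j))
    (hθv : ∀ i : V, θhat s(some i, none) = θv i)
    (i j : V) (hij : G.Adj i j) :
    momentPair Ghat (fun _ => 0) θhat (some i) (some j) = momentPair G θv θe i j := by
  classical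
  -- abbreviations
  set ES : (V → Bool) → ℝ :=
    fun x => ∑ e ∈ G.edgeFinset, θe e * pairProd (fun i => spin (x i)) e with hES
  set VS : (V → Bool) → ℝ := fun x => ∑ i, θv i * spin (x i) with hVS
  -- energy of an extended configuration
  have hE : ∀ (b : Bool) (x : V → Bool),
      energy Ghat (fun _ => 0) θhat (fun o => o.elim b x) = ES x + spin b * VS x := by
    intro b x
    rw [energy, edgeFinset_ghat G Ghat hsome hnone]
    have hdisj : Disjoint (G.edgeFinset.image (Sym2.map some))
        (Finset.univ.image (fun a : V => s(some a, none))) := by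
      rw [Finset.disjoint_left]
      rintro e he1 he2
      simp only [Finset.mem_image, Finset.mem_univ, true_and] at he1 he2
      obtain ⟨e', _, rfl⟩ := he1
      obtain ⟨a, ha⟩ := he2
      induction e' using Sym2.ind with
      | _ p q =>
        rw [Sym2.map_pair_eq, Sym2.eq_iff] at ha
        rcases ha with ⟨_, h2⟩ | ⟨h1, _⟩ <;> simp_all
    rw [Finset.sum_union hdisj]
    have hinj1 : ∀ x ∈ G.edgeFinset, ∀ y ∈ G.edgeFinset,
        Sym2.map some x = Sym2.map some y → x = y := fun x _ y _ h =>
      Sym2.map.injective (Option.some_injective V) h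
    have hinj2 : ∀ a ∈ (Finset.univ : Finset V), ∀ b ∈ (Finset.univ : Finset V),
        s(some a, (none : Option V)) = s(some b, none) → a = b := by
      intro a _ b _ h
      rw [Sym2.eq_iff] at h
      rcases h with ⟨h1, _⟩ | ⟨_, h2⟩ <;> simp_all
    rw [Finset.sum_image hinj1, Finset.sum_image hinj2]
    have h1 : ∑ e ∈ G.edgeFinset,
        θhat (Sym2.map some e) * pairProd (fun o => spin (o.elim b x)) (Sym2.map some e)
        = ES x := by
      rw [hES]
      refine Finset.sum_congr rfl ?_
      intro e he
      induction e using Sym2.ind with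
      | _ p q =>
        have hpq : G.Adj p q := by simpa using he
        rw [Sym2.map_pair_eq, hθe p q hpq, pairProd_mk, pairProd_mk]
        rfl
    have h2 : ∑ a : V,
        θhat s(some a, none) * pairProd (fun o => spin (o.elim b x)) s(some a, none)
        = spin b * VS x := by
      rw [hVS, Finset.mul_sum]
      refine Finset.sum_congr rfl ?_
      intro a _
      rw [pairProd_mk, hθv a]
      show θv a * (spin (x a) * spin b) = spin b * (θv a * spin (x a))
      ring
    rw [h1, h2]
    simp
  -- flip properties
  have hESflip : ∀ x : V → Bool, ES (fun v => !(x v)) = ES x := by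
    intro x
    rw [hES]
    refine Finset.sum_congr rfl ?_
    intro e _
    induction e using Sym2.ind with
    | _ p q => rw [pairProd_mk, pairProd_mk]; simp only [spin_not]; ring_nf
  have hVSflip : ∀ x : V → Bool, VS (fun v => !(x v)) = - VS x := by
    intro x
    rw [hVS, ← Finset.sum_neg_distrib]
    refine Finset.sum_congr rfl ?_
    intro a _
    rw [spin_not]; ring
  -- splitting sums over extended configurations
  have hsplit : ∀ F : (Option V → Bool) → ℝ,
      ∑ y : Option V → Bool, F y =
        ∑ x : V → Bool, F (fun o => o.elim true x) +
          ∑ x : V → Bool, F (fun o => o.elim false x) := by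
    intro F
    rw [← Fintype.sum_equiv (extEquiv V) (fun p => F (extEquiv V p)) F (fun p => rfl)]
    rw [Fintype.sum_prod_type, Fintype.sum_bool]
    rfl
  -- the main doubling identity
  have key : ∀ g : (V → Bool) → ℝ, (∀ x, g (fun v => !(x v)) = g x) →
      ∑ y : Option V → Bool, Real.exp (energy Ghat (fun _ => 0) θhat y) * g (fun v => y (some v))
        = 2 * ∑ x : V → Bool, Real.exp (energy G θv θe x) * g x := by
    intro g hg
    rw [hsplit]
    have hG : ∀ x : V → Bool, energy G θv θe x = ES x + VS x := by
      intro x; rw [energy, hES, hVS]; ring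
    have e1 : ∑ x : V → Bool,
        Real.exp (energy Ghat (fun _ => 0) θhat (fun o => o.elim true x)) *
          g (fun v => (fun o => o.elim true x) (some v))
        = ∑ x : V → Bool, Real.exp (energy G θv θe x) * g x := by
      refine Finset.sum_congr rfl fun x _ => ?_
      rw [hE true x, hG x]
      show Real.exp (ES x + spin true * VS x) * g x = _
      simp [spin]
    have e2 : ∑ x : V → Bool,
        Real.exp (energy Ghat (fun _ => 0) θhat (fun o => o.elim false x)) *
          g (fun v => (fun o => o.elim false x) (some v))
        = ∑ x : V → Bool, Real.exp (energy G θv θe x) * g x := by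
      have := sum_flip (fun x => Real.exp (energy G θv θe x) * g x)
      rw [← this]
      refine Finset.sum_congr rfl fun x _ => ?_
      rw [hE false x, hG (fun v => !(x v)), hESflip, hVSflip, hg]
      show Real.exp (ES x + spin false * VS x) * g x = Real.exp (ES x + -VS x) * g x
      simp [spin]
    rw [e1, e2]
    ring
  -- now put it together
  have hZ : partitionFn Ghat (fun _ => 0) θhat = 2 * partitionFn G θv θe := by
    rw [partitionFn, partitionFn]
    have := key (fun _ => 1) (fun _ => rfl)
    simpa using this
  have hmom : ∀ (H : SimpleGraph V) [DecidableRel H.Adj] (tv : V → ℝ) (te : Sym2 V → ℝ)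
      (a b : V), momentPair H tv te a b =
        (∑ x : V → Bool, Real.exp (energy H tv te x) * spin (x a) * spin (x b)) /
          partitionFn H tv te := by
    intro H _ tv te a b
    rw [momentPair, Finset.sum_div]
    refine Finset.sum_congr rfl fun x _ => ?_
    rw [isingProb]
    ring
  have hmomhat : ∀ (H : SimpleGraph (Option V)) [DecidableRel H.Adj]
      (tv : Option V → ℝ) (te : Sym2 (Option V) → ℝ) (a b : Option V),
      momentPair H tv te a b =
        (∑ x : Option V → Bool, Real.exp (energy H tv te x) * spin (x a) * spin (x b)) /
          partitionFn H tv te := by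
    intro H _ tv te a b
    rw [momentPair, Finset.sum_div]
    refine Finset.sum_congr rfl fun x _ => ?_
    rw [isingProb]
    ring
  rw [hmom G θv θe i j, hmomhat Ghat (fun _ => 0) θhat (some i) (some j), hZ]
  have hnum : ∑ y : Option V → Bool,
      Real.exp (energy Ghat (fun _ => 0) θhat y) * spin (y (some i)) * spin (y (some j))
      = 2 * ∑ x : V → Bool, Real.exp (energy G θv θe x) * spin (x i) * spin (x j) := by
    have hg : ∀ x : V → Bool,
        (fun z : V → Bool => spin (z i) * spin (z j)) (fun v => !(x v)) =
          (fun z : V → Bool => spin (z i) * spin (z j)) x := by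
      intro x
      show spin (!(x i)) * spin (!(x j)) = spin (x i) * spin (x j)
      rw [spin_not, spin_not]; ring
    have := key (fun z => spin (z i) * spin (z j)) hg
    calc ∑ y : Option V → Bool,
          Real.exp (energy Ghat (fun _ => 0) θhat y) * spin (y (some i)) * spin (y (some j))
        = ∑ y : Option V → Bool, Real.exp (energy Ghat (fun _ => 0) θhat y) *
            ((fun z : V → Bool => spin (z i) * spin (z j)) (fun v => y (some v))) := by
          refine Finset.sum_congr rfl fun y _ => ?_; ring
      _ = 2 * ∑ x : V → Bool, Real.exp (energy G θv θe x) * (spin (x i) * spin (x j)) := this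
      _ = 2 * ∑ x : V → Bool, Real.exp (energy G θv θe x) * spin (x i) * spin (x j) := by
          congr 1; refine Finset.sum_congr rfl fun x _ => ?_; ring
  rw [hnum, mul_div_mul_left _ _ (two_ne_zero)]
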